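/- For every α ∈ ℤ^d there exists an essential point ε for Q such that (ε + Q) ∩ Q = (α + Q) ∩ Q. -/

import Mathlib

/-- The shift `α + S = {α + s : s ∈ S}` of a set `S ⊆ ℤ^d` by `α ∈ ℤ^d`. -/
def shiftSet {d : ℕ} (α : Fin d → ℤ) (S : Set (Fin d → ℤ)) : Set (Fin d → ℤ) :=
  (α + ·) '' S

/-- An essential point for `Q` is an `ε ∈ ℤ^d` such that whenever `a ∈ Q` satisfies
`(a + ε + Q) ∩ Q = (ε + Q) ∩ Q`, `a` is a unit of `Q` (i.e. `-a ∈ Q`). -/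
def essentialPoint {d : ℕ} (Q : AddSubmonoid (Fin d → ℤ)) (ε : Fin d → ℤ) : Prop :=
  ∀ a ∈ Q, shiftSet (a + ε) (Q : Set (Fin d → ℤ)) ∩ (Q : Set (Fin d → ℤ)) =
      shiftSet ε (Q : Set (Fin d → ℤ)) ∩ (Q : Set (Fin d → ℤ)) → -a ∈ Q

lemma mem_shiftSet {d : ℕ} {γ x : Fin d → ℤ} {S : Set (Fin d → ℤ)} :
    x ∈ shiftSet γ S ↔ x - γ ∈ S := by
  constructor
  · rintro ⟨q, hq, rfl⟩; simpa using hq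
  · intro h; exact ⟨x - γ, h, by funext i; simp⟩

/-- For every `α ∈ ℤ^d` there exists an essential point `ε` for `Q` such that
`(ε + Q) ∩ Q = (α + Q) ∩ Q`. -/
theorem stmt8 {d : ℕ} (Q : AddSubmonoid (Fin d → ℤ)) (hFG : Q.FG)
    (hgp : AddSubgroup.closure (Q : Set (Fin d → ℤ)) = ⊤)
    (α : Fin d → ℤ) :
    ∃ ε : Fin d → ℤ, essentialPoint Q ε ∧
      shiftSet ε (Q : Set (Fin d → ℤ)) ∩ (Q : Set (Fin d → ℤ)) =
        shiftSet α (Q : Set (Fin d → ℤ)) ∩ (Q : Set (Fin d → ℤ)) := by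
  classical
  -- α is a difference of two elements of Q
  have hdiff : ∃ p ∈ Q, ∃ q ∈ Q, α = p - q := by
    have hv : α ∈ AddSubgroup.closure (Q : Set (Fin d → ℤ)) := by
      rw [hgp]; exact AddSubgroup.mem_top α
    refine AddSubgroup.closure_induction ?_ ?_ ?_ ?_ hv
    · intro x hx; exact ⟨x, hx, 0, zero_mem Q, by abel⟩
    · exact ⟨0, zero_mem Q, 0, zero_mem Q, by abel⟩
    · rintro x y - - ⟨p1, hp1, q1, hq1, rfl⟩ ⟨p2, hp2, q2, hq2, rfl⟩
      exact ⟨p1 + p2, add_mem hp1 hp2, q1 + q2, add_mem hq1 hq2, by abel⟩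
    · rintro x - ⟨p1, hp1, q1, hq1, rfl⟩
      exact ⟨q1, hq1, p1, hp1, by abel⟩
  obtain ⟨p, hp, β, hβ, hα⟩ := hdiff
  -- the set U
  set U : Set (Fin d → ℤ) := {a | a ∈ Q ∧
      shiftSet (α + a) (Q : Set (Fin d → ℤ)) ∩ (Q : Set (Fin d → ℤ)) =
        shiftSet α (Q : Set (Fin d → ℤ)) ∩ (Q : Set (Fin d → ℤ))} with hU
  have h0 : (0 : Fin d → ℤ) ∈ U := ⟨zero_mem Q, by rw [add_zero]⟩
  -- every element of U divides β
  have hdivβ : ∀ a ∈ U, β - a ∈ Q := by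
    rintro a ⟨haQ, haI⟩
    have hpmem : p ∈ shiftSet α (Q : Set (Fin d → ℤ)) ∩ (Q : Set (Fin d → ℤ)) := by
      refine ⟨mem_shiftSet.2 ?_, hp⟩
      have : p - α = β := by rw [hα]; abel
      rw [this]; exact hβ
    rw [← haI] at hpmem
    have h1 : p - (α + a) ∈ Q := mem_shiftSet.1 hpmem.1
    have h2 : β - a = p - (α + a) := by rw [hα]; abel
    rw [h2]; exact h1
  -- key claim: a maximal element of U exists
  have key : ∃ a₀ ∈ U, ∀ a ∈ Q, a₀ + a ∈ U → -a ∈ Q := by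
    by_contra hc
    push_neg at hc
    -- build an infinite strictly increasing chain
    have step : ∀ u : {u : Fin d → ℤ // u ∈ U},
        ∃ c : Fin d → ℤ, c ∈ Q ∧ (u.1 + c ∈ U ∧ ¬(-c ∈ Q)) := fun u => hc u.1 u.2
    choose c hcQ hcU hcnu using step
    let stepf : {u : Fin d → ℤ // u ∈ U} → {u : Fin d → ℤ // u ∈ U} :=
      fun u => ⟨u.1 + c u, hcU u⟩
    let seq : ℕ → {u : Fin d → ℤ // u ∈ U} := fun k => stepf^[k] ⟨0, h0⟩
    have hseq : ∀ k, seq (k + 1) = stepf (seq k) := fun k =>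
      Function.iterate_succ_apply' stepf k ⟨0, h0⟩
    have hstepQ : ∀ k, (seq (k + 1)).1 - (seq k).1 ∈ Q := by
      intro k; rw [hseq k]
      have : (stepf (seq k)).1 - (seq k).1 = c (seq k) := by
        show (seq k).1 + c (seq k) - (seq k).1 = c (seq k); abel
      rw [this]; exact hcQ _
    have hstepnu : ∀ k, ¬(-((seq (k + 1)).1 - (seq k).1) ∈ Q) := by
      intro k; rw [hseq k]
      have : (stepf (seq k)).1 - (seq k).1 = c (seq k) := by
        show (seq k).1 + c (seq k) - (seq k).1 = c (seq k); abel
      rw [this]; exact hcnu _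
    have hmono : ∀ k l, k ≤ l → (seq l).1 - (seq k).1 ∈ Q := by
      intro k l hkl
      induction l, hkl using Nat.le_induction with
      | base => simpa using zero_mem Q
      | succ n hn ih =>
        have : (seq (n + 1)).1 - (seq k).1 =
            ((seq (n + 1)).1 - (seq n).1) + ((seq n).1 - (seq k).1) := by abel
        rw [this]; exact add_mem (hstepQ n) ih
    -- multiset lifts
    obtain ⟨S, hS⟩ := hFG
    have hmemcl : ∀ k : ℕ, β - (seq k).1 ∈ AddSubmonoid.closure (S : Set (Fin d → ℤ)) := by
      intro k; rw [hS]; exact hdivβ _ (seq k).2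
    choose m hmS hmsum using fun k => AddSubmonoid.exists_multiset_of_mem_closure (hmemcl k)
    -- Dickson's lemma
    have hPWO : (Set.univ : Set (↥S → ℕ)).IsPWO :=
      Set.isPWO_of_wellQuasiOrderedLE Set.univ
    obtain ⟨k, k', hkk', hle⟩ :=
      hPWO.exists_lt (f := fun k (g : ↥S) => (m k).count g.1) (fun _ => Set.mem_univ _)
    have hmle : m k ≤ m k' := by
      rw [Multiset.le_iff_count]
      intro a
      by_cases ha : a ∈ S
      · exact hle ⟨a, ha⟩
      · have : a ∉ m k := fun hmem => ha (hmS k a hmem)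
        simp [Multiset.count_eq_zero_of_notMem this]
    have hD : m k + (m k' - m k) = m k' := add_tsub_cancel_of_le hmle
    have hDsum : (m k' - m k).sum = (seq k).1 - (seq k').1 := by
      have h3 := congrArg Multiset.sum hD
      rw [Multiset.sum_add, hmsum, hmsum] at h3
      have := sub_eq_of_eq_add' h3.symm
      rw [← this]; abel
    have hDQ : (m k' - m k).sum ∈ Q := by
      refine AddSubmonoid.multiset_sum_mem _ _ ?_
      intro x hx
      have hxk' : x ∈ m k' := Multiset.mem_of_le (Multiset.sub_le_self _ _) hx
      have : x ∈ (S : Set (Fin d → ℤ)) := hmS k' x hxk'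
      rw [← hS]; exact AddSubmonoid.subset_closure this
    rw [hDsum] at hDQ
    -- derive contradiction
    refine hstepnu k ?_
    have heq : -((seq (k + 1)).1 - (seq k).1) =
        ((seq k').1 - (seq (k + 1)).1) + ((seq k).1 - (seq k').1) := by abel
    rw [heq]
    exact add_mem (hmono (k + 1) k' hkk') hDQ
  obtain ⟨a₀, ⟨ha₀Q, ha₀I⟩, hmax⟩ := key
  refine ⟨α + a₀, ?_, ha₀I⟩
  intro a haQ haeq
  refine hmax a haQ ⟨add_mem ha₀Q haQ, ?_⟩
  have harg : a + (α + a₀) = α + (a₀ + a) := by abel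
  rw [harg] at haeq
  rw [haeq, ha₀I]
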